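/- For each fixed integer m ≥ 3, the limit lim_{n→∞} G_{m̄×n̄}(1)^{1/(mn)} (over the torus) exists and equals lim_{n→∞} G_{m̄×n}(1)^{1/(mn)} (over the cylinder); that is, the per-vertex growth rate of the number of dominating sets of the m×n torus equals the growth rate μ̄_m of the m×n cylinder as n → ∞. -/

import Mathlib

open scoped Classical

/-- `S` is a dominating set of `G`: every vertex is in `S` or adjacent to a vertex of `S`. -/
def IsDominating {V : Type*} (G : SimpleGraph V) (S : Finset V) : Prop :=
  ∀ v : V, v ∈ S ∨ ∃ u ∈ S, G.Adj u v

/-- The m×n cylinder graph `C_m □ P_n`. -/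
def cylinderGraph (m n : ℕ) : SimpleGraph (Fin m × Fin n) :=
  (SimpleGraph.cycleGraph m).boxProd (SimpleGraph.pathGraph n)

/-- The m×n torus graph `C_m □ C_n`. -/
def torusGraph (m n : ℕ) : SimpleGraph (Fin m × Fin n) :=
  (SimpleGraph.cycleGraph m).boxProd (SimpleGraph.cycleGraph n)

/-- `G_{m̄×n}(1)`: the total number of dominating sets of the m×n cylinder graph. -/
noncomputable def numDomCyl (m n : ℕ) : ℕ :=
  (Finset.univ.filter
    (fun S : Finset (Fin m × Fin n) => IsDominating (cylinderGraph m n) S)).card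

/-- `G_{m̄×n̄}(1)`: the total number of dominating sets of the m×n torus graph. -/
noncomputable def numDomTorus (m n : ℕ) : ℕ :=
  (Finset.univ.filter
    (fun S : Finset (Fin m × Fin n) => IsDominating (torusGraph m n) S)).card

open Finset SimpleGraph

lemma isDominating_mono {V : Type*} {G H : SimpleGraph V} (hGH : G ≤ H) {S : Finset V}
    (hS : IsDominating G S) : IsDominating H S := fun v =>
  (hS v).imp id (fun ⟨u, hu, ha⟩ => ⟨u, hu, hGH ha⟩)

lemma one_le_card_dom {V : Type*} [Fintype V] (G : SimpleGraph V) :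
    1 ≤ (Finset.univ.filter (fun S : Finset V => IsDominating G S)).card := by
  refine Finset.card_pos.2 ⟨Finset.univ, ?_⟩
  simp only [Finset.mem_filter, Finset.mem_univ, true_and]
  exact fun v => Or.inl (Finset.mem_univ v)

lemma one_le_numDomCyl (m n : ℕ) : 1 ≤ numDomCyl m n := one_le_card_dom _
lemma one_le_numDomTorus (m n : ℕ) : 1 ≤ numDomTorus m n := one_le_card_dom _

lemma numDomCyl_le_pow (m n : ℕ) : numDomCyl m n ≤ 2 ^ (m * n) := by
  calc numDomCyl m n ≤ (Finset.univ : Finset (Finset (Fin m × Fin n))).card :=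
        Finset.card_filter_le _ _
    _ = 2 ^ (m * n) := by simp [Finset.card_univ]

lemma numDomCyl_le_numDomTorus (m n : ℕ) : numDomCyl m n ≤ numDomTorus m n := by
  apply Finset.card_le_card
  intro S hS
  simp only [Finset.mem_filter, Finset.mem_univ, true_and] at hS ⊢
  refine isDominating_mono (fun x y hxy => ?_) hS
  rw [cylinderGraph, SimpleGraph.boxProd_adj] at hxy
  rw [torusGraph, SimpleGraph.boxProd_adj]
  exact hxy.imp id (fun h => ⟨pathGraph_le_cycleGraph h.1, h.2⟩)

/-- gluing map for cylinders -/
noncomputable def glue (m a b : ℕ)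
    (p : Finset (Fin m × Fin a) × Finset (Fin m × Fin b)) : Finset (Fin m × Fin (a + b)) :=
  p.1.image (fun q => (q.1, Fin.castAdd b q.2)) ∪ p.2.image (fun q => (q.1, Fin.natAdd a q.2))

lemma mem_glue_left {m a b : ℕ} (p : Finset (Fin m × Fin a) × Finset (Fin m × Fin b))
    (i : Fin m) (j : Fin a) : (i, Fin.castAdd b j) ∈ glue m a b p ↔ (i, j) ∈ p.1 := by
  simp only [glue, Finset.mem_union, Finset.mem_image, Prod.mk.injEq, Prod.exists]
  constructor
  · rintro (⟨x, y, hxy, hx, hy⟩ | ⟨x, y, hxy, hx, hy⟩)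
    · have hy' : y = j := by
        apply Fin.ext
        have := congrArg Fin.val hy
        simpa using this
      subst hx hy'
      exact hxy
    · exfalso
      have := congrArg Fin.val hy
      simp [Fin.natAdd] at this
      omega
  · intro h
    exact Or.inl ⟨i, j, h, rfl, rfl⟩

lemma mem_glue_right {m a b : ℕ} (p : Finset (Fin m × Fin a) × Finset (Fin m × Fin b))
    (i : Fin m) (j : Fin b) : (i, Fin.natAdd a j) ∈ glue m a b p ↔ (i, j) ∈ p.2 := by
  simp only [glue, Finset.mem_union, Finset.mem_image, Prod.mk.injEq, Prod.exists]
  constructor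
  · rintro (⟨x, y, hxy, hx, hy⟩ | ⟨x, y, hxy, hx, hy⟩)
    · exfalso
      have := congrArg Fin.val hy
      simp [Fin.castAdd, Fin.natAdd] at this
      omega
    · have hy' : y = j := by
        apply Fin.ext
        have := congrArg Fin.val hy
        simpa using this
      subst hx hy'
      exact hxy
  · intro h
    exact Or.inr ⟨i, j, h, rfl, rfl⟩

lemma glue_dominating {m a b : ℕ} {S1 : Finset (Fin m × Fin a)} {S2 : Finset (Fin m × Fin b)}
    (h1 : IsDominating (cylinderGraph m a) S1) (h2 : IsDominating (cylinderGraph m b) S2) :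
    IsDominating (cylinderGraph m (a + b)) (glue m a b (S1, S2)) := by
  rintro ⟨i, j⟩
  by_cases hj : j.val < a
  · have hjeq : Fin.castAdd b (⟨j.val, hj⟩ : Fin a) = j := by apply Fin.ext; simp
    obtain hin | ⟨⟨u1, u2⟩, hu, hadj⟩ := h1 (i, ⟨j.val, hj⟩)
    · left
      rw [← hjeq]
      exact (mem_glue_left _ _ _).2 hin
    · right
      refine ⟨(u1, Fin.castAdd b u2), (mem_glue_left _ _ _).2 hu, ?_⟩
      rw [cylinderGraph, SimpleGraph.boxProd_adj] at hadj ⊢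
      rcases hadj with ⟨hc, h2'⟩ | ⟨hp, h1'⟩
      · refine Or.inl ⟨hc, ?_⟩
        show Fin.castAdd b u2 = j
        have h2'' : u2 = ⟨j.val, hj⟩ := h2'
        rw [h2'']; exact hjeq
      · refine Or.inr ⟨?_, h1'⟩
        rw [SimpleGraph.pathGraph_adj] at hp ⊢
        simp only [Fin.coe_castAdd]
        simpa using hp
  · push_neg at hj
    have hjb : j.val - a < b := by omega
    have hjeq : Fin.natAdd a (⟨j.val - a, hjb⟩ : Fin b) = j := by
      apply Fin.ext; simp [Fin.natAdd]; omega
    obtain hin | ⟨⟨u1, u2⟩, hu, hadj⟩ := h2 (i, ⟨j.val - a, hjb⟩)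
    · left
      rw [← hjeq]
      exact (mem_glue_right _ _ _).2 hin
    · right
      refine ⟨(u1, Fin.natAdd a u2), (mem_glue_right _ _ _).2 hu, ?_⟩
      rw [cylinderGraph, SimpleGraph.boxProd_adj] at hadj ⊢
      rcases hadj with ⟨hc, h2'⟩ | ⟨hp, h1'⟩
      · refine Or.inl ⟨hc, ?_⟩
        show Fin.natAdd a u2 = j
        have h2'' : u2 = ⟨j.val - a, hjb⟩ := h2'
        rw [h2'']; exact hjeq
      · refine Or.inr ⟨?_, h1'⟩
        rw [SimpleGraph.pathGraph_adj] at hp ⊢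
        simp only [Fin.coe_natAdd] at *
        omega
  
lemma numDomCyl_supermul (m a b : ℕ) :
    numDomCyl m a * numDomCyl m b ≤ numDomCyl m (a + b) := by
  rw [numDomCyl, numDomCyl, numDomCyl, ← Finset.card_product]
  apply Finset.card_le_card_of_injOn (glue m a b)
  · rintro ⟨S1, S2⟩ hp
    simp only [Finset.mem_coe, Finset.mem_product, Finset.mem_filter, Finset.mem_univ, true_and] at hp
    simp only [Finset.mem_coe, Finset.mem_filter, Finset.mem_univ, true_and]
    exact glue_dominating hp.1 hp.2
  · rintro ⟨S1, S2⟩ _ ⟨T1, T2⟩ _ h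
    have e1 : S1 = T1 := by
      ext ⟨i, j⟩
      rw [← mem_glue_left (S1, S2) i j, h, mem_glue_left]
    have e2 : S2 = T2 := by
      ext ⟨i, j⟩
      rw [← mem_glue_right (S1, S2) i j, h, mem_glue_right]
    simp [e1, e2]

/-- padding map : torus dominating sets into cylinder (n+2) dominating sets -/
noncomputable def pad (m n : ℕ) (S : Finset (Fin m × Fin n)) : Finset (Fin m × Fin (n + 2)) :=
  S.image (fun q => (q.1, (⟨q.2.val + 1, by omega⟩ : Fin (n + 2))))
    ∪ Finset.univ.image (fun i : Fin m => (i, (⟨0, by omega⟩ : Fin (n + 2))))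
    ∪ Finset.univ.image (fun i : Fin m => (i, (⟨n + 1, by omega⟩ : Fin (n + 2))))

lemma mem_pad {m n : ℕ} (S : Finset (Fin m × Fin n)) (i : Fin m) (j : Fin n) :
    (i, (⟨j.val + 1, by omega⟩ : Fin (n + 2))) ∈ pad m n S ↔ (i, j) ∈ S := by
  have hj := j.isLt
  simp only [pad, Finset.mem_union, Finset.mem_image, Prod.mk.injEq, Prod.exists,
    Finset.mem_univ, true_and, Fin.mk.injEq]
  constructor
  · rintro ((⟨x, y, hxy, hx, hy⟩ | ⟨x, hx, hy⟩) | ⟨x, hx, hy⟩)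
    · have hy' : y = j := Fin.ext (by omega)
      subst hx hy'
      exact hxy
    · exact absurd hy (by omega)
    · exact absurd hy (by omega)
  · intro h
    exact Or.inl (Or.inl ⟨i, j, h, rfl, rfl⟩)

lemma pad_dominating {m n : ℕ} (hn : 3 ≤ n) {S : Finset (Fin m × Fin n)}
    (hS : IsDominating (torusGraph m n) S) :
    IsDominating (cylinderGraph m (n + 2)) (pad m n S) := by
  have hmod : ∀ x : ℕ, x < 2 * n → x % n = x ∨ x % n = x - n := by
    intro x hx
    rcases Nat.lt_or_ge x n with h | h
    · exact Or.inl (Nat.mod_eq_of_lt h)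
    · right
      rw [Nat.mod_eq_sub_mod h, Nat.mod_eq_of_lt (by omega)]
  rintro ⟨i, j⟩
  rcases Nat.eq_zero_or_pos j.val with hj0 | hj0
  · left
    have : j = ⟨0, by omega⟩ := Fin.ext hj0
    rw [this]
    exact Finset.mem_union_left _ (Finset.mem_union_right _
      (Finset.mem_image.2 ⟨i, Finset.mem_univ i, rfl⟩))
  rcases Nat.lt_or_ge j.val (n + 1) with hjn | hjn
  swap
  · left
    have : j = ⟨n + 1, by omega⟩ := Fin.ext (show j.val = n + 1 by have := j.isLt; omega)
    rw [this]
    exact Finset.mem_union_right _ (Finset.mem_image.2 ⟨i, Finset.mem_univ i, rfl⟩)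
  · have hk : j.val - 1 < n := by omega
    set k : Fin n := ⟨j.val - 1, hk⟩ with hkdef
    have hkj : k.val = j.val - 1 := rfl
    have hjk : j = ⟨k.val + 1, by omega⟩ := Fin.ext (show j.val = k.val + 1 by omega)
    rcases Nat.eq_zero_or_pos k.val with hk0 | hk0
    · right
      refine ⟨(i, ⟨0, by omega⟩), Finset.mem_union_left _ (Finset.mem_union_right _
        (Finset.mem_image.2 ⟨i, Finset.mem_univ i, rfl⟩)), ?_⟩
      rw [cylinderGraph, SimpleGraph.boxProd_adj]
      refine Or.inr ⟨?_, rfl⟩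
      rw [SimpleGraph.pathGraph_adj]
      left
      show 0 + 1 = j.val
      omega
    rcases Nat.lt_or_ge k.val (n - 1) with hklt | hkge
    swap
    · right
      refine ⟨(i, ⟨n + 1, by omega⟩), Finset.mem_union_right _
        (Finset.mem_image.2 ⟨i, Finset.mem_univ i, rfl⟩), ?_⟩
      rw [cylinderGraph, SimpleGraph.boxProd_adj]
      refine Or.inr ⟨?_, rfl⟩
      rw [SimpleGraph.pathGraph_adj]
      right
      show j.val + 1 = n + 1
      omega
    obtain hin | ⟨⟨u1, u2⟩, hu, hadj⟩ := hS (i, k)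
    · left
      rw [hjk]
      exact (mem_pad S i k).2 hin
    · right
      rw [torusGraph, SimpleGraph.boxProd_adj] at hadj
      rcases hadj with ⟨hc, h2'⟩ | ⟨hcyc, h1'⟩
      · refine ⟨(u1, ⟨u2.val + 1, by omega⟩), (mem_pad S u1 u2).2 hu, ?_⟩
        rw [cylinderGraph, SimpleGraph.boxProd_adj]
        have h2'' : u2 = k := h2'
        refine Or.inl ⟨hc, ?_⟩
        have hv : u2.val = j.val - 1 := congrArg Fin.val h2''
        exact Fin.ext (show u2.val + 1 = j.val by omega)
      · have h1'' : u1 = i := h1'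
        rw [SimpleGraph.cycleGraph_adj'] at hcyc
        have hval : u2.val = k.val + 1 ∨ u2.val + 1 = k.val := by
          have hu2 := u2.isLt
          have hkl := k.isLt
          rcases hcyc with h | h
          · rw [Fin.sub_def] at h
            have h' : ((n - k.val) + u2.val) % n = 1 := h
            rcases hmod ((n - k.val) + u2.val) (by omega) with hm | hm <;> omega
          · rw [Fin.sub_def] at h
            have h' : ((n - u2.val) + k.val) % n = 1 := h
            rcases hmod ((n - u2.val) + k.val) (by omega) with hm | hm <;> omega
        refine ⟨(u1, ⟨u2.val + 1, by omega⟩), (mem_pad S u1 u2).2 hu, ?_⟩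
        rw [cylinderGraph, SimpleGraph.boxProd_adj]
        refine Or.inr ⟨?_, h1''⟩
        rw [SimpleGraph.pathGraph_adj]
        rcases hval with h | h
        · right
          show j.val + 1 = u2.val + 1
          omega
        · left
          show (u2.val + 1) + 1 = j.val
          omega
lemma numDomTorus_le {m n : ℕ} (hn : 3 ≤ n) : numDomTorus m n ≤ numDomCyl m (n + 2) := by
  rw [numDomTorus, numDomCyl]
  apply Finset.card_le_card_of_injOn (pad m n)
  · intro S hS
    simp only [Finset.mem_coe, Finset.mem_filter, Finset.mem_univ, true_and] at hS ⊢
    exact pad_dominating hn hS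
  · intro S _ T _ h
    ext ⟨i, j⟩
    rw [← mem_pad S i j, h, mem_pad]



open Filter Real Topology

/-- For each fixed `m ≥ 3`, the per-vertex growth rate
`lim_{n→∞} G_{m̄×n̄}(1)^{1/(mn)}` of the torus exists and equals the growth rate
`lim_{n→∞} G_{m̄×n}(1)^{1/(mn)}` of the cylinder. -/
theorem torus_growth_eq_cylinder_growth (m : ℕ) (hm : 3 ≤ m) :
    ∃ L : ℝ,
      Filter.Tendsto (fun n : ℕ => (numDomTorus m n : ℝ) ^ ((1 : ℝ) / (m * n : ℕ)))
        Filter.atTop (nhds L) ∧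
      Filter.Tendsto (fun n : ℕ => (numDomCyl m n : ℝ) ^ ((1 : ℝ) / (m * n : ℕ)))
        Filter.atTop (nhds L) := by
  have hm0 : (0:ℝ) < m := by exact_mod_cast (by omega : 0 < m)
  set f : ℕ → ℕ := numDomCyl m with hf
  have hf1 : ∀ n, (1:ℝ) ≤ f n := fun n => by exact_mod_cast one_le_numDomCyl m n
  have hfpos : ∀ n, (0:ℝ) < f n := fun n => lt_of_lt_of_le one_pos (hf1 n)
  set u : ℕ → ℝ := fun n => -Real.log (f n) with hu
  have hsub : Subadditive u := by
    intro a b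
    have hmul : (f a : ℝ) * f b ≤ f (a + b) := by exact_mod_cast numDomCyl_supermul m a b
    have hlog := Real.log_le_log (mul_pos (hfpos a) (hfpos b)) hmul
    rw [Real.log_mul (ne_of_gt (hfpos a)) (ne_of_gt (hfpos b))] at hlog
    simp only [hu]
    linarith
  have hbdd : BddBelow (Set.range fun n : ℕ => u n / n) := by
    refine ⟨-(m * Real.log 2), ?_⟩
    rintro x ⟨n, rfl⟩
    have hlog2 : (0:ℝ) ≤ Real.log 2 := Real.log_nonneg (by norm_num)
    rcases Nat.eq_zero_or_pos n with hn | hn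
    · subst hn
      simp only [hu, Nat.cast_zero, div_zero]
      nlinarith
    · have hle : (f n : ℝ) ≤ 2 ^ (m * n) := by exact_mod_cast numDomCyl_le_pow m n
      have hlog : Real.log (f n) ≤ (m * n : ℕ) * Real.log 2 := by
        calc Real.log (f n) ≤ Real.log (2 ^ (m * n)) := Real.log_le_log (hfpos n) hle
          _ = (m * n : ℕ) * Real.log 2 := by
              rw [Real.log_pow]
      rw [le_div_iff₀ (show (0:ℝ) < n by exact_mod_cast hn)]
      simp only [hu]
      push_cast at hlog ⊢
      nlinarith
  have hulim := hsub.tendsto_lim hbdd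
  set γ : ℝ := -hsub.lim / m with hγ
  have clog : Tendsto (fun n : ℕ => Real.log (f n) / (m * n)) atTop (𝓝 γ) := by
    have h1 : Tendsto (fun n : ℕ => -(u n / n) / m) atTop (𝓝 (-hsub.lim / m)) :=
      hulim.neg.div_const m
    refine h1.congr fun n => ?_
    simp only [hu, neg_div, neg_neg]
    rw [div_div, mul_comm]
  have hexp : ∀ (g : ℕ → ℕ), (∀ n, (1:ℝ) ≤ g n) → ∀ {c : ℝ},
      Tendsto (fun n : ℕ => Real.log (g n) / (m * n)) atTop (𝓝 c) →
      Tendsto (fun n : ℕ => (g n : ℝ) ^ ((1 : ℝ) / (m * n : ℕ)))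
        atTop (𝓝 (Real.exp c)) := by
    intro g hg c hc
    have h1 := (Real.continuous_exp.tendsto c).comp hc
    refine h1.congr fun n => ?_
    show Real.exp (Real.log (g n) / (m * n)) = (g n : ℝ) ^ ((1 : ℝ) / (m * n : ℕ))
    rw [Real.rpow_def_of_pos (lt_of_lt_of_le one_pos (hg n)), mul_one_div]
    push_cast
    ring_nf
  have cshift : Tendsto (fun n : ℕ => Real.log (f (n + 2)) / (m * ((n : ℝ) + 2)))
      atTop (𝓝 γ) := by
    have h1 := clog.comp (tendsto_add_atTop_nat 2)
    refine h1.congr fun n => ?_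
    show Real.log (f (n + 2)) / (m * ((n + 2 : ℕ) : ℝ)) = _
    push_cast
    ring_nf
  have hratio : Tendsto (fun n : ℕ => ((n : ℝ) + 2) / n) atTop (𝓝 1) := by
    have h2 : Tendsto (fun n : ℕ => 2 / (n : ℝ)) atTop (𝓝 0) :=
      tendsto_const_div_atTop_nhds_zero_nat 2
    have h1 := (tendsto_const_nhds (x := (1:ℝ)) (f := atTop)).add h2
    rw [add_zero] at h1
    refine h1.congr' ?_
    filter_upwards [eventually_gt_atTop 0] with n hn
    have hn' : (n : ℝ) ≠ 0 := Nat.cast_ne_zero.2 (by omega)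
    field_simp
  have dlim : Tendsto (fun n : ℕ => Real.log (f (n + 2)) / (m * n)) atTop (𝓝 γ) := by
    have h1 := cshift.mul hratio
    rw [mul_one] at h1
    refine h1.congr' ?_
    filter_upwards [eventually_gt_atTop 0] with n hn
    have hn' : (n : ℝ) ≠ 0 := Nat.cast_ne_zero.2 (by omega)
    have hm' : (m : ℝ) ≠ 0 := ne_of_gt hm0
    field_simp
  have hg1 : ∀ n, (1:ℝ) ≤ numDomTorus m n := fun n => by
    exact_mod_cast one_le_numDomTorus m n
  have hgpos : ∀ n, (0:ℝ) < numDomTorus m n := fun n => lt_of_lt_of_le one_pos (hg1 n)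
  have tlog : Tendsto (fun n : ℕ => Real.log (numDomTorus m n) / (m * n)) atTop (𝓝 γ) := by
    refine tendsto_of_tendsto_of_tendsto_of_le_of_le' clog dlim ?_ ?_
    · refine Eventually.of_forall fun n => ?_
      have hab : Real.log (f n) ≤ Real.log (numDomTorus m n) :=
        Real.log_le_log (hfpos n) (by exact_mod_cast numDomCyl_le_numDomTorus m n)
      gcongr
    · filter_upwards [eventually_ge_atTop 3] with n hn
      have hab : Real.log (numDomTorus m n) ≤ Real.log (f (n + 2)) :=
        Real.log_le_log (hgpos n) (by exact_mod_cast numDomTorus_le (m := m) hn)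
      gcongr
  exact ⟨Real.exp γ, hexp (numDomTorus m) hg1 tlog, hexp f hf1 clog⟩
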